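/- For every integer d ≥ 0: (1) T_x e_i = (-1)^i e_{d-i} for 0 ≤ i ≤ d, and (2) P³ = T_x² = (-1)^d I, where I is the (d+1)×(d+1) identity matrix. -/

import Mathlib

open Matrix

noncomputable section

/-- The matrix X* acting on the standard basis of V(d) by
X* eᵢ = (i-d-1)e_{i-1} + (d-2i)eᵢ + (i+1)e_{i+1}. -/
def Xs (d : ℕ) : Matrix (Fin (d + 1)) (Fin (d + 1)) ℚ :=
  Matrix.of fun j i =>
    if (j : ℕ) + 1 = (i : ℕ) then (i : ℚ) - d - 1
    else if (j : ℕ) = (i : ℕ) then (d : ℚ) - 2 * (i : ℕ)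
    else if (j : ℕ) = (i : ℕ) + 1 then (i : ℚ) + 1
    else 0

/-- The matrix Y* acting by Y* eᵢ = (i+1)e_{i+1}. -/
def Ys (d : ℕ) : Matrix (Fin (d + 1)) (Fin (d + 1)) ℚ :=
  Matrix.of fun j i => if (j : ℕ) = (i : ℕ) + 1 then (i : ℚ) + 1 else 0

/-- The matrix Z* acting by Z* eᵢ = (i-d-1)e_{i-1}. -/
def Zs (d : ℕ) : Matrix (Fin (d + 1)) (Fin (d + 1)) ℚ :=
  Matrix.of fun j i => if (j : ℕ) + 1 = (i : ℕ) then (i : ℚ) - d - 1 else 0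

/-- The exponential of a nilpotent (d+1)×(d+1) matrix, as the finite sum
∑_{k≤d} Aᵏ/k!. -/
def expM {d : ℕ} (A : Matrix (Fin (d + 1)) (Fin (d + 1)) ℚ) :
    Matrix (Fin (d + 1)) (Fin (d + 1)) ℚ :=
  ∑ k ∈ Finset.range (d + 1), ((Nat.factorial k : ℚ)⁻¹) • A ^ k

/-- P = exp(X*)·exp(Y*). -/
def P (d : ℕ) : Matrix (Fin (d + 1)) (Fin (d + 1)) ℚ := expM (Xs d) * expM (Ys d)

/-- T_x = exp(Y*)·exp(Z*)·exp(Y*). -/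
def Tx (d : ℕ) : Matrix (Fin (d + 1)) (Fin (d + 1)) ℚ :=
  expM (Ys d) * expM (Zs d) * expM (Ys d)

namespace Stmt19

open Finset

/-- exp(Y*) : the lower-triangular Pascal matrix. -/
def EY (d : ℕ) : Matrix (Fin (d + 1)) (Fin (d + 1)) ℚ :=
  Matrix.of fun j i => (Nat.choose j i : ℚ)

/-- exp(Z*) : signed upper-triangular Pascal-type matrix. -/
def EZ (d : ℕ) : Matrix (Fin (d + 1)) (Fin (d + 1)) ℚ :=
  Matrix.of fun j i =>
    (-1 : ℚ) ^ (i : ℕ) * (-1 : ℚ) ^ (j : ℕ) * ((d - (j : ℕ)).choose (d - (i : ℕ)) : ℚ)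

/-- The matrix P = EY * EZ. -/
def Fm (d : ℕ) : Matrix (Fin (d + 1)) (Fin (d + 1)) ℚ :=
  Matrix.of fun j i => (-1 : ℚ) ^ (i : ℕ) * ((d - (j : ℕ)).choose (i : ℕ) : ℚ)

/-- The matrix P². -/
def F2m (d : ℕ) : Matrix (Fin (d + 1)) (Fin (d + 1)) ℚ :=
  Matrix.of fun j i => (-1 : ℚ) ^ (i : ℕ) * ((j : ℕ).choose (d - (i : ℕ)) : ℚ)

/-- The matrix T_x : signed antidiagonal. -/
def Tm (d : ℕ) : Matrix (Fin (d + 1)) (Fin (d + 1)) ℚ :=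
  Matrix.of fun j i => if (j : ℕ) + (i : ℕ) = d then (-1 : ℚ) ^ (i : ℕ) else 0

lemma neg_one_pow_sub (a b : ℕ) (h : b ≤ a) : (-1 : ℚ) ^ (a - b) = (-1) ^ a * (-1) ^ b := by
  have h1 : (-1 : ℚ) ^ (a - b) * (-1) ^ b = (-1) ^ a := by
    rw [← pow_add]; congr 1; omega
  have h2 : ((-1 : ℚ) ^ b) * ((-1) ^ b) = 1 := by
    rw [← pow_add, ← two_mul, pow_mul]; norm_num
  calc (-1 : ℚ) ^ (a - b) = (-1 : ℚ) ^ (a - b) * (((-1 : ℚ) ^ b) * ((-1) ^ b)) := by rw [h2, mul_one]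
    _ = ((-1 : ℚ) ^ (a - b) * (-1) ^ b) * (-1) ^ b := by ring
    _ = (-1) ^ a * (-1) ^ b := by rw [h1]

lemma expM_apply {d : ℕ} (A : Matrix (Fin (d + 1)) (Fin (d + 1)) ℚ) (j i : Fin (d + 1)) :
    expM A j i = ∑ k ∈ range (d + 1), ((Nat.factorial k : ℚ)⁻¹) * (A ^ k) j i := by
  unfold expM
  rw [Matrix.sum_apply]
  exact Finset.sum_congr rfl fun k _ => by rw [Matrix.smul_apply, smul_eq_mul]

lemma ys_pow (d k : ℕ) : (Ys d) ^ k = Matrix.of fun j i : Fin (d + 1) =>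
    if (j : ℕ) = (i : ℕ) + k then ((j : ℕ).factorial : ℚ) / ((i : ℕ).factorial : ℚ) else 0 := by
  induction k with
  | zero =>
    ext j i
    simp only [pow_zero, Matrix.one_apply, Matrix.of_apply, add_zero]
    by_cases h : j = i
    · subst h
      rw [if_pos rfl, if_pos rfl, div_self (by positivity)]
    · rw [if_neg h, if_neg (fun hc => h (Fin.ext hc))]
  | succ k ih =>
    ext j i
    rw [pow_succ, Matrix.mul_apply]
    simp only [ih, Matrix.of_apply]
    simp only [Ys, Matrix.of_apply]
    by_cases hi : (i : ℕ) < d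
    · rw [Finset.sum_eq_single_of_mem (⟨(i : ℕ) + 1, by omega⟩ : Fin (d + 1))
        (Finset.mem_univ _) (fun b _ hb => by
          rw [if_neg fun hc => hb (Fin.ext (show (b : ℕ) = (i : ℕ) + 1 from hc)), mul_zero])]
      rw [if_pos (show (i : ℕ) + 1 = (i : ℕ) + 1 from rfl)]
      by_cases hj : (j : ℕ) = (i : ℕ) + (k + 1)
      · rw [if_pos (show (j : ℕ) = (i : ℕ) + 1 + k by omega), if_pos hj, Nat.factorial_succ]
        have h0 : ((i : ℕ).factorial : ℚ) ≠ 0 := by positivity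
        push_cast
        field_simp
      · rw [if_neg (show ¬ ((j : ℕ) = (i : ℕ) + 1 + k) by omega), if_neg hj, zero_mul]
    · rw [Finset.sum_eq_zero fun t _ => by
        rw [if_neg (by omega : ¬ ((t : ℕ) = (i : ℕ) + 1)), mul_zero]]
      rw [if_neg (by omega)]

lemma zs_pow (d k : ℕ) : (Zs d) ^ k = Matrix.of fun j i : Fin (d + 1) =>
    if (i : ℕ) = (j : ℕ) + k then
      (-1 : ℚ) ^ k * ((d - (j : ℕ)).factorial : ℚ) / ((d - (i : ℕ)).factorial : ℚ) else 0 := by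
  induction k with
  | zero =>
    ext j i
    simp only [pow_zero, Matrix.one_apply, Matrix.of_apply, add_zero]
    by_cases h : j = i
    · subst h
      rw [if_pos rfl, if_pos rfl, one_mul, div_self (by positivity)]
    · rw [if_neg h, if_neg (fun hc => h (Fin.ext hc.symm))]
  | succ k ih =>
    ext j i
    rw [pow_succ, Matrix.mul_apply]
    simp only [ih, Matrix.of_apply]
    simp only [Zs, Matrix.of_apply]
    by_cases hi : 1 ≤ (i : ℕ)
    · rw [Finset.sum_eq_single_of_mem (⟨(i : ℕ) - 1, by omega⟩ : Fin (d + 1))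
        (Finset.mem_univ _) (fun b _ hb => by
          rw [if_neg (show ¬ ((b : ℕ) + 1 = (i : ℕ)) from
            fun hc => hb (Fin.ext (show (b : ℕ) = (i : ℕ) - 1 by omega))), mul_zero])]
      rw [if_pos (show (i : ℕ) - 1 + 1 = (i : ℕ) by omega)]
      by_cases hj : (i : ℕ) = (j : ℕ) + (k + 1)
      · rw [if_pos (show (i : ℕ) - 1 = (j : ℕ) + k by omega), if_pos hj]
        obtain ⟨m, hdm⟩ : ∃ m, d = (i : ℕ) + m := ⟨d - (i : ℕ), by omega⟩
        have h1 : d - ((i : ℕ) - 1) = m + 1 := by omega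
        have h3 : d - (i : ℕ) = m := by omega
        have h2 : ((i : ℕ) : ℚ) - (d : ℚ) - 1 = -((m : ℚ) + 1) := by
          have hq : (d : ℚ) = ((i : ℕ) : ℚ) + (m : ℚ) := by exact_mod_cast hdm
          rw [hq]; ring
        rw [h1, h3, h2, Nat.factorial_succ]
        have h0 : (m.factorial : ℚ) ≠ 0 := by positivity
        push_cast
        field_simp
        ring
      · rw [if_neg (show ¬ ((i : ℕ) - 1 = (j : ℕ) + k) by omega), if_neg hj, zero_mul]
    · rw [Finset.sum_eq_zero fun t _ => by
        rw [if_neg (by omega : ¬ ((t : ℕ) + 1 = (i : ℕ))), mul_zero]]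
      rw [if_neg (by omega)]

lemma expM_Ys (d : ℕ) : expM (Ys d) = EY d := by
  ext j i
  rw [expM_apply]
  simp only [ys_pow, Matrix.of_apply, EY]
  by_cases h : (i : ℕ) ≤ (j : ℕ)
  · rw [Finset.sum_eq_single_of_mem ((j : ℕ) - (i : ℕ))
      (Finset.mem_range.2 (by omega)) (fun b _ hb => by rw [if_neg (by omega), mul_zero])]
    rw [if_pos (by omega), Nat.cast_choose ℚ h, mul_comm, ← div_eq_mul_inv, div_div,
      mul_comm (((i : ℕ).factorial : ℚ)) _]
  · rw [Finset.sum_eq_zero fun k _ => by rw [if_neg (by omega), mul_zero]]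
    rw [Nat.choose_eq_zero_of_lt (by omega), Nat.cast_zero]

lemma expM_Zs (d : ℕ) : expM (Zs d) = EZ d := by
  ext j i
  rw [expM_apply]
  simp only [zs_pow, Matrix.of_apply, EZ]
  by_cases h : (j : ℕ) ≤ (i : ℕ)
  · rw [Finset.sum_eq_single_of_mem ((i : ℕ) - (j : ℕ))
      (Finset.mem_range.2 (by omega)) (fun b _ hb => by rw [if_neg (by omega), mul_zero])]
    rw [if_pos (by omega)]
    have hij : (i : ℕ) - (j : ℕ) ≤ d - (j : ℕ) := by omega
    have hch : ((d - (j : ℕ)).choose (d - (i : ℕ)) : ℚ)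
        = ((d - (j : ℕ)).factorial : ℚ) /
          ((((i : ℕ) - (j : ℕ)).factorial : ℚ) * ((d - (i : ℕ)).factorial : ℚ)) := by
      have hsymm : (d - (j : ℕ)).choose (d - (i : ℕ)) = (d - (j : ℕ)).choose ((i : ℕ) - (j : ℕ)) := by
        have h2 : d - (i : ℕ) = (d - (j : ℕ)) - ((i : ℕ) - (j : ℕ)) := by omega
        rw [h2, Nat.choose_symm hij]
      have h2 : (d - (j : ℕ)) - ((i : ℕ) - (j : ℕ)) = d - (i : ℕ) := by omega
      rw [hsymm, Nat.cast_choose ℚ hij, h2]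
    rw [hch, neg_one_pow_sub _ _ h]
    have h0 : (((i : ℕ) - (j : ℕ)).factorial : ℚ) ≠ 0 := by positivity
    have h1 : ((d - (i : ℕ)).factorial : ℚ) ≠ 0 := by positivity
    field_simp
  · rw [Finset.sum_eq_zero fun k _ => by rw [if_neg (by omega), mul_zero]]
    rw [Nat.choose_eq_zero_of_lt (by omega), Nat.cast_zero, mul_zero]


/-- Diagonal part of X*. -/
def Dm (d : ℕ) : Matrix (Fin (d + 1)) (Fin (d + 1)) ℚ :=
  Matrix.of fun j i => if (j : ℕ) = (i : ℕ) then (d : ℚ) - 2 * (i : ℕ) else 0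

lemma Xs_decomp (d : ℕ) : Xs d = Zs d + Ys d + Dm d := by
  ext j i
  simp only [Xs, Zs, Ys, Dm, Matrix.add_apply, Matrix.of_apply]
  split_ifs <;> (try ring) <;> (exfalso; omega)

lemma Zs_mul_EY (d : ℕ) : Zs d * EY d =
    Matrix.of fun j i : Fin (d + 1) => (((j : ℕ) : ℚ) - d) * (((j : ℕ) + 1).choose (i : ℕ) : ℚ) := by
  ext j i
  rw [Matrix.mul_apply]
  simp only [Zs, EY, Matrix.of_apply]
  by_cases hj : (j : ℕ) < d
  · rw [Finset.sum_eq_single_of_mem (⟨(j : ℕ) + 1, by omega⟩ : Fin (d + 1))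
      (Finset.mem_univ _) (fun b _ hb => by
        rw [if_neg (show ¬ ((j : ℕ) + 1 = (b : ℕ)) from
          fun hc => hb (Fin.ext (show (b : ℕ) = (j : ℕ) + 1 by omega))), zero_mul])]
    rw [if_pos (show (j : ℕ) + 1 = (j : ℕ) + 1 from rfl)]
    push_cast
    ring
  · have hjd : (j : ℕ) = d := by omega
    rw [Finset.sum_eq_zero fun t _ => by
      rw [if_neg (show ¬ ((j : ℕ) + 1 = (t : ℕ)) by omega), zero_mul]]
    rw [hjd, sub_self, zero_mul]

lemma Ys_mul_EY (d : ℕ) : Ys d * EY d =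
    Matrix.of fun j i : Fin (d + 1) => ((j : ℕ) : ℚ) * (((j : ℕ) - 1).choose (i : ℕ) : ℚ) := by
  ext j i
  rw [Matrix.mul_apply]
  simp only [Ys, EY, Matrix.of_apply]
  by_cases hj : 1 ≤ (j : ℕ)
  · rw [Finset.sum_eq_single_of_mem (⟨(j : ℕ) - 1, by omega⟩ : Fin (d + 1))
      (Finset.mem_univ _) (fun b _ hb => by
        rw [if_neg (show ¬ ((j : ℕ) = (b : ℕ) + 1) from
          fun hc => hb (Fin.ext (show (b : ℕ) = (j : ℕ) - 1 by omega))), zero_mul])]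
    rw [if_pos (show (j : ℕ) = (j : ℕ) - 1 + 1 by omega)]
    have : (((j : ℕ) - 1 : ℕ) : ℚ) + 1 = ((j : ℕ) : ℚ) := by
      have h2 : ((j : ℕ) - 1 : ℕ) + 1 = (j : ℕ) := by omega
      exact_mod_cast congrArg (Nat.cast : ℕ → ℚ) h2
    rw [this]
  · have hj0 : (j : ℕ) = 0 := by omega
    rw [Finset.sum_eq_zero fun t _ => by
      rw [if_neg (show ¬ ((j : ℕ) = (t : ℕ) + 1) by omega), zero_mul]]
    rw [hj0]
    norm_num

lemma Dm_mul_EY (d : ℕ) : Dm d * EY d =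
    Matrix.of fun j i : Fin (d + 1) => ((d : ℚ) - 2 * (j : ℕ)) * ((j : ℕ).choose (i : ℕ) : ℚ) := by
  ext j i
  rw [Matrix.mul_apply]
  simp only [Dm, EY, Matrix.of_apply]
  rw [Finset.sum_eq_single_of_mem j (Finset.mem_univ _) (fun b _ hb => by
    rw [if_neg (show ¬ ((j : ℕ) = (b : ℕ)) from
      fun hc => hb (Fin.ext hc.symm)), zero_mul])]
  rw [if_pos rfl]

lemma EY_mul_Zs (d : ℕ) : EY d * Zs d =
    Matrix.of fun j i : Fin (d + 1) => if 1 ≤ (i : ℕ) then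
      (((i : ℕ) : ℚ) - d - 1) * ((j : ℕ).choose ((i : ℕ) - 1) : ℚ) else 0 := by
  ext j i
  rw [Matrix.mul_apply]
  simp only [EY, Zs, Matrix.of_apply]
  by_cases hi : 1 ≤ (i : ℕ)
  · rw [Finset.sum_eq_single_of_mem (⟨(i : ℕ) - 1, by omega⟩ : Fin (d + 1))
      (Finset.mem_univ _) (fun b _ hb => by
        rw [if_neg (show ¬ ((b : ℕ) + 1 = (i : ℕ)) from
          fun hc => hb (Fin.ext (show (b : ℕ) = (i : ℕ) - 1 by omega))), mul_zero])]
    rw [if_pos hi, if_pos (show (i : ℕ) - 1 + 1 = (i : ℕ) by omega)]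
    ring
  · rw [Finset.sum_eq_zero fun t _ => by
      rw [if_neg (show ¬ ((t : ℕ) + 1 = (i : ℕ)) by omega), mul_zero]]
    rw [if_neg hi]

lemma key_choose (d j i : ℕ) :
    (((j : ℕ) : ℚ) - d) * ((j + 1).choose i : ℚ) + (j : ℚ) * ((j - 1).choose i : ℚ)
      + ((d : ℚ) - 2 * j) * (j.choose i : ℚ)
    = if 1 ≤ i then ((i : ℚ) - d - 1) * (j.choose (i - 1) : ℚ) else 0 := by
  rcases i with _ | i'
  · rw [if_neg (by omega)]
    simp only [Nat.choose_zero_right, Nat.cast_one]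
    ring
  · rw [if_pos (by omega), Nat.add_sub_cancel]
    rcases j with _ | j'
    · rcases i' with _ | i''
      · norm_num
      · simp only [Nat.choose_eq_zero_of_lt (by omega : (0 : ℕ) < i'' + 1 + 1),
          Nat.choose_eq_zero_of_lt (by omega : (0 : ℕ) < i'' + 1),
          Nat.choose_eq_zero_of_lt (by omega : (1 : ℕ) < i'' + 1 + 1)]
        norm_num
    · have eA : ((j' + 2).choose (i' + 1) : ℚ)
          = ((j' + 1).choose i' : ℚ) + ((j' + 1).choose (i' + 1) : ℚ) := by
        exact_mod_cast congrArg (Nat.cast : ℕ → ℚ) (Nat.choose_succ_succ (j' + 1) i')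
      have eB : ((j' + 1).choose (i' + 1) : ℚ)
          = (j'.choose i' : ℚ) + (j'.choose (i' + 1) : ℚ) := by
        exact_mod_cast congrArg (Nat.cast : ℕ → ℚ) (Nat.choose_succ_succ j' i')
      have eC : (j'.choose i' : ℚ) * ((j' : ℚ) + 1)
          = ((j' + 1).choose i' : ℚ) * ((j' : ℚ) + 1 - (i' : ℚ)) := by
        rcases le_or_gt i' (j' + 1) with h | h
        · have hn := Nat.choose_mul_succ_eq j' i'
          have hc : ((j' + 1 - i' : ℕ) : ℚ) = (j' : ℚ) + 1 - (i' : ℚ) := by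
            push_cast [Nat.cast_sub h]
            ring
          calc (j'.choose i' : ℚ) * ((j' : ℚ) + 1)
              = ((j'.choose i' * (j' + 1) : ℕ) : ℚ) := by push_cast; ring
            _ = (((j' + 1).choose i' * (j' + 1 - i') : ℕ) : ℚ) := by rw [hn]
            _ = ((j' + 1).choose i' : ℚ) * ((j' : ℚ) + 1 - (i' : ℚ)) := by
                push_cast [Nat.cast_sub h]; ring
        · rw [Nat.choose_eq_zero_of_lt (by omega), Nat.choose_eq_zero_of_lt (by omega)]
          norm_num
      have hsub : ((j' + 1 : ℕ) - 1 : ℕ) = j' := by omega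
      rw [hsub]
      push_cast
      linear_combination (((j' : ℚ) + 1) - (d : ℚ)) * eA - ((j' : ℚ) + 1) * eB - eC

lemma intertwine (d : ℕ) : Xs d * EY d = EY d * Zs d := by
  rw [Xs_decomp, add_mul, add_mul, Zs_mul_EY, Ys_mul_EY, Dm_mul_EY, EY_mul_Zs]
  ext j i
  simp only [Matrix.add_apply, Matrix.of_apply]
  exact key_choose d j i

lemma pow_intertwine (d k : ℕ) : Xs d ^ k * EY d = EY d * Zs d ^ k := by
  induction k with
  | zero => simp
  | succ k ih =>
    rw [pow_succ, mul_assoc, intertwine, ← mul_assoc, ih, mul_assoc, ← pow_succ]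

lemma expM_intertwine (d : ℕ) : expM (Xs d) * EY d = EY d * expM (Zs d) := by
  unfold expM
  rw [Finset.sum_mul, Finset.mul_sum]
  exact Finset.sum_congr rfl fun k _ => by
    rw [Matrix.smul_mul, Matrix.mul_smul, pow_intertwine]

lemma P_eq (d : ℕ) : P d = EY d * EZ d := by
  rw [P, expM_Ys, expM_intertwine, expM_Zs]


lemma sumA : ∀ (j n m : ℕ), j ≤ n → m ≤ n →
    ∑ a ∈ Finset.range (n + 1), ((-1 : ℚ) ^ a * (j.choose a : ℚ) * ((n - a).choose m : ℚ))
      = ((n - j).choose (n - m) : ℚ) := by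
  intro j
  induction j with
  | zero =>
    intro n m _ hm
    rw [Finset.sum_eq_single_of_mem 0 (Finset.mem_range.2 (by omega))
      (fun b _ hb => by
        rw [Nat.choose_eq_zero_of_lt (by omega), Nat.cast_zero, mul_zero, zero_mul])]
    simp only [Nat.sub_zero]
    rw [Nat.choose_symm hm]
    norm_num
  | succ j ih =>
    intro n m hj hm
    rcases Nat.lt_or_ge m n with hmn | hmn
    · -- m < n
      have hsplit : ∀ b, (-1 : ℚ) ^ (b + 1) * (((j + 1).choose (b + 1)) : ℚ)
            * (((n - (b + 1)).choose m) : ℚ)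
          = -((-1 : ℚ) ^ b * ((j.choose b) : ℚ) * ((((n - 1) - b).choose m) : ℚ))
            + (-1 : ℚ) ^ (b + 1) * ((j.choose (b + 1)) : ℚ) * (((n - (b + 1)).choose m) : ℚ) := by
        intro b
        have h1 : n - (b + 1) = (n - 1) - b := by omega
        rw [h1, Nat.choose_succ_succ]
        push_cast
        ring
      have e3 : ∑ b ∈ Finset.range n, ((-1 : ℚ) ^ b * ((j.choose b) : ℚ)
            * ((((n - 1) - b).choose m) : ℚ))
          = (((n - 1) - j).choose ((n - 1) - m) : ℚ) := by
        have h := ih (n - 1) m (by omega) (by omega)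
        have hn1 : (n - 1) + 1 = n := by omega
        rw [hn1] at h
        exact h
      have e4 := ih n m (by omega) hm
      rw [Finset.sum_range_succ' _ n] at e4 ⊢
      rw [Finset.sum_congr rfl (fun b _ => hsplit b), Finset.sum_add_distrib,
        Finset.sum_neg_distrib, e3]
      have hpas : ((n - j).choose (n - m) : ℚ)
          = (((n - 1) - j).choose ((n - 1) - m) : ℚ) + ((n - (j + 1)).choose (n - m) : ℚ) := by
        have h1 : n - j = (n - j - 1) + 1 := by omega
        have h2 : n - m = (n - m - 1) + 1 := by omega
        have h3 := Nat.choose_succ_succ (n - j - 1) (n - m - 1)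
        have h4 : (n - 1) - j = n - j - 1 := by omega
        have h5 : (n - 1) - m = n - m - 1 := by omega
        have h6 : n - (j + 1) = n - j - 1 := by omega
        rw [h1, h2, h4, h5, h6, h3]
        push_cast
        ring
      have hz : ((-1 : ℚ) ^ 0 * (((j + 1).choose 0) : ℚ) * (((n - 0).choose m) : ℚ))
          = ((-1 : ℚ) ^ 0 * ((j.choose 0) : ℚ) * (((n - 0).choose m) : ℚ)) := by
        norm_num
      rw [hz]
      linarith [e4, hpas]
    · -- m = n
      have hmn' : m = n := by omega
      rw [Finset.sum_eq_single_of_mem 0 (Finset.mem_range.2 (by omega))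
        (fun b hb hb0 => by
          rw [Finset.mem_range] at hb
          rw [Nat.choose_eq_zero_of_lt (show n - b < m by omega), Nat.cast_zero, mul_zero])]
      have h7 : n - m = 0 := by omega
      rw [h7, hmn']
      simp

lemma sumB (n i N : ℕ) (hn : n ≤ N) :
    ∑ b ∈ Finset.range (N + 1), ((-1 : ℚ) ^ b * (n.choose b : ℚ) * (b.choose i : ℚ))
      = (-1 : ℚ) ^ i * (if n = i then 1 else 0) := by
  have htrunc : ∑ b ∈ Finset.range (N + 1), ((-1 : ℚ) ^ b * (n.choose b : ℚ) * (b.choose i : ℚ))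
      = ∑ b ∈ Finset.range (n + 1), ((-1 : ℚ) ^ b * (n.choose b : ℚ) * (b.choose i : ℚ)) := by
    symm
    apply Finset.sum_subset
    · intro x hx
      rw [Finset.mem_range] at hx ⊢
      omega
    · intro x hx hnx
      rw [Finset.mem_range] at hx hnx
      rw [Nat.choose_eq_zero_of_lt (by omega), Nat.cast_zero, mul_zero, zero_mul]
  rw [htrunc]
  by_cases hni : i ≤ n
  · have hdrop : ∑ b ∈ Finset.range (n + 1), ((-1 : ℚ) ^ b * (n.choose b : ℚ) * (b.choose i : ℚ))
        = ∑ b ∈ Finset.Ico i (n + 1), ((-1 : ℚ) ^ b * (n.choose b : ℚ) * (b.choose i : ℚ)) := by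
      symm
      apply Finset.sum_subset
      · intro x hx
        rw [Finset.mem_Ico] at hx
        exact Finset.mem_range.2 (by omega)
      · intro x hx hnx
        rw [Finset.mem_range] at hx
        rw [Finset.mem_Ico] at hnx
        rw [Nat.choose_eq_zero_of_lt (by omega : x < i), Nat.cast_zero, mul_zero]
    rw [hdrop, Finset.sum_Ico_eq_sum_range]
    have htri : ∀ t, ((n.choose (i + t)) : ℚ) * (((i + t).choose i) : ℚ)
        = ((n.choose i) : ℚ) * (((n - i).choose t) : ℚ) := by
      intro t
      rcases Nat.lt_or_ge n (i + t) with h | h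
      · rw [Nat.choose_eq_zero_of_lt h, Nat.choose_eq_zero_of_lt (by omega : n - i < t)]
        norm_num
      · have c1 : ((n.choose (i + t)) : ℚ)
            = (n.factorial : ℚ) / (((i + t).factorial : ℚ) * ((n - (i + t)).factorial : ℚ)) :=
          Nat.cast_choose ℚ h
        have c2 : (((i + t).choose i) : ℚ)
            = ((i + t).factorial : ℚ) / ((i.factorial : ℚ) * (t.factorial : ℚ)) := by
          have := Nat.cast_choose ℚ (Nat.le_add_right i t)
          rwa [Nat.add_sub_cancel_left] at this
        have c3 : ((n.choose i) : ℚ)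
            = (n.factorial : ℚ) / ((i.factorial : ℚ) * ((n - i).factorial : ℚ)) :=
          Nat.cast_choose ℚ (by omega)
        have c4 : (((n - i).choose t) : ℚ)
            = ((n - i).factorial : ℚ) / ((t.factorial : ℚ) * ((n - (i + t)).factorial : ℚ)) := by
          have := Nat.cast_choose ℚ (by omega : t ≤ n - i)
          have h2 : n - i - t = n - (i + t) := by omega
          rwa [h2] at this
        rw [c1, c2, c3, c4]
        have f1 : ((i + t).factorial : ℚ) ≠ 0 := by positivity
        have f2 : ((n - (i + t)).factorial : ℚ) ≠ 0 := by positivity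
        have f3 : (i.factorial : ℚ) ≠ 0 := by positivity
        have f4 : (t.factorial : ℚ) ≠ 0 := by positivity
        have f5 : ((n - i).factorial : ℚ) ≠ 0 := by positivity
        field_simp
    have hshape : ∀ t, ((-1 : ℚ) ^ (i + t) * ((n.choose (i + t)) : ℚ) * (((i + t).choose i) : ℚ))
        = ((-1 : ℚ) ^ i * ((n.choose i) : ℚ)) * ((-1 : ℚ) ^ t * (((n - i).choose t) : ℚ)) := by
      intro t
      rw [pow_add]
      linear_combination ((-1 : ℚ) ^ i * (-1 : ℚ) ^ t) * htri t
    rw [Finset.sum_congr rfl (fun t _ => hshape t), ← Finset.mul_sum]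
    have hrange : n + 1 - i = (n - i) + 1 := by omega
    rw [hrange]
    have halt : ∑ t ∈ Finset.range ((n - i) + 1), ((-1 : ℚ) ^ t * (((n - i).choose t) : ℚ))
        = if n - i = 0 then 1 else 0 := by
      rcases Nat.eq_zero_or_pos (n - i) with h0 | h0
      · rw [h0]
        norm_num
      · rw [if_neg (by omega)]
        have h := Int.alternating_sum_range_choose_of_ne (n := n - i) (by omega)
        have h2 := congrArg (fun z : ℤ => (z : ℚ)) h
        push_cast at h2
        convert h2 using 1
      
    rw [halt]
    by_cases hne : n = i
    · subst hne
      rw [if_pos rfl, if_pos (by omega), Nat.choose_self]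
      norm_num
    · rw [if_neg hne, if_neg (by omega)]
      norm_num
  · rw [Finset.sum_eq_zero fun b hb => by
      rw [Finset.mem_range] at hb
      rw [Nat.choose_eq_zero_of_lt (by omega : b < i), Nat.cast_zero, mul_zero]]
    rw [if_neg (by omega), mul_zero]


lemma EY_mul_EZ (d : ℕ) : EY d * EZ d = Fm d := by
  ext j i
  have hj := j.isLt
  have hi := i.isLt
  rw [Matrix.mul_apply]
  simp only [EY, EZ, Fm, Matrix.of_apply]
  have hstep : ∀ t : Fin (d + 1),
      ((Nat.choose (j : ℕ) (t : ℕ) : ℚ)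
        * ((-1 : ℚ) ^ (i : ℕ) * (-1 : ℚ) ^ (t : ℕ) * ((d - (t : ℕ)).choose (d - (i : ℕ)) : ℚ)))
      = (-1 : ℚ) ^ (i : ℕ) * ((-1 : ℚ) ^ (t : ℕ) * ((j : ℕ).choose (t : ℕ) : ℚ)
        * ((d - (t : ℕ)).choose (d - (i : ℕ)) : ℚ)) := fun t => by ring
  rw [Finset.sum_congr rfl fun t _ => hstep t, ← Finset.mul_sum]
  rw [Fin.sum_univ_eq_sum_range
    (fun a => (-1 : ℚ) ^ a * ((j : ℕ).choose a : ℚ) * ((d - a).choose (d - (i : ℕ)) : ℚ)) (d + 1)]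
  rw [sumA (j : ℕ) d (d - (i : ℕ)) (by omega) (by omega)]
  have h2 : d - (d - (i : ℕ)) = (i : ℕ) := by omega
  rw [h2]

lemma Fm_mul_EY (d : ℕ) : Fm d * EY d = Tm d := by
  ext j i
  have hj := j.isLt
  have hi := i.isLt
  rw [Matrix.mul_apply]
  simp only [Fm, EY, Tm, Matrix.of_apply]
  rw [Fin.sum_univ_eq_sum_range
    (fun b => (-1 : ℚ) ^ b * ((d - (j : ℕ)).choose b : ℚ) * (b.choose (i : ℕ) : ℚ)) (d + 1)]
  rw [sumB (d - (j : ℕ)) (i : ℕ) d (by omega)]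
  by_cases h : (j : ℕ) + (i : ℕ) = d
  · rw [if_pos (by omega : d - (j : ℕ) = (i : ℕ)), if_pos h, mul_one]
  · rw [if_neg (by omega : ¬ (d - (j : ℕ) = (i : ℕ))), if_neg h, mul_zero]

lemma Fm_mul_Fm (d : ℕ) : Fm d * Fm d = F2m d := by
  ext j i
  have hj := j.isLt
  have hi := i.isLt
  rw [Matrix.mul_apply]
  simp only [Fm, F2m, Matrix.of_apply]
  have hstep : ∀ t : Fin (d + 1),
      (((-1 : ℚ) ^ (t : ℕ) * ((d - (j : ℕ)).choose (t : ℕ) : ℚ))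
        * ((-1 : ℚ) ^ (i : ℕ) * ((d - (t : ℕ)).choose (i : ℕ) : ℚ)))
      = (-1 : ℚ) ^ (i : ℕ) * ((-1 : ℚ) ^ (t : ℕ) * ((d - (j : ℕ)).choose (t : ℕ) : ℚ)
        * ((d - (t : ℕ)).choose (i : ℕ) : ℚ)) := fun t => by ring
  rw [Finset.sum_congr rfl fun t _ => hstep t, ← Finset.mul_sum]
  rw [Fin.sum_univ_eq_sum_range
    (fun a => (-1 : ℚ) ^ a * ((d - (j : ℕ)).choose a : ℚ) * ((d - a).choose (i : ℕ) : ℚ)) (d + 1)]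
  rw [sumA (d - (j : ℕ)) d (i : ℕ) (by omega) (by omega)]
  have h2 : d - (d - (j : ℕ)) = (j : ℕ) := by omega
  rw [h2]

lemma F2m_mul_Fm (d : ℕ) :
    F2m d * Fm d = ((-1 : ℚ) ^ d) • (1 : Matrix (Fin (d + 1)) (Fin (d + 1)) ℚ) := by
  ext j i
  have hj := j.isLt
  have hi := i.isLt
  rw [Matrix.mul_apply]
  simp only [F2m, Fm, Matrix.of_apply, Matrix.smul_apply, Matrix.one_apply, smul_eq_mul]
  have hstep : ∀ t : Fin (d + 1),
      (((-1 : ℚ) ^ (t : ℕ) * ((j : ℕ).choose (d - (t : ℕ)) : ℚ))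
        * ((-1 : ℚ) ^ (i : ℕ) * ((d - (t : ℕ)).choose (i : ℕ) : ℚ)))
      = (-1 : ℚ) ^ (i : ℕ) * ((-1 : ℚ) ^ (t : ℕ) * ((j : ℕ).choose (d - (t : ℕ)) : ℚ)
        * ((d - (t : ℕ)).choose (i : ℕ) : ℚ)) := fun t => by ring
  rw [Finset.sum_congr rfl fun t _ => hstep t, ← Finset.mul_sum]
  rw [Fin.sum_univ_eq_sum_range
    (fun b => (-1 : ℚ) ^ b * ((j : ℕ).choose (d - b) : ℚ) * ((d - b).choose (i : ℕ) : ℚ)) (d + 1)]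
  rw [← Finset.sum_range_reflect]
  have hcong : ∀ b ∈ Finset.range (d + 1),
      ((-1 : ℚ) ^ (d + 1 - 1 - b) * ((j : ℕ).choose (d - (d + 1 - 1 - b)) : ℚ)
        * ((d - (d + 1 - 1 - b)).choose (i : ℕ) : ℚ))
      = (-1 : ℚ) ^ d * ((-1 : ℚ) ^ b * ((j : ℕ).choose b : ℚ) * (b.choose (i : ℕ) : ℚ)) := by
    intro b hb
    rw [Finset.mem_range] at hb
    have h1 : d + 1 - 1 - b = d - b := by omega
    have h2 : d - (d - b) = b := by omega
    rw [h1, h2, neg_one_pow_sub d b (by omega)]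
    ring
  rw [Finset.sum_congr rfl hcong, ← Finset.mul_sum]
  rw [sumB (j : ℕ) (i : ℕ) d (by omega)]
  have hval : (j : ℕ) = (i : ℕ) ↔ j = i := by
    constructor
    · exact fun h => Fin.ext h
    · exact fun h => by rw [h]
  by_cases h : j = i
  · rw [if_pos (hval.2 h), if_pos h]
    have hsq : ((-1 : ℚ) ^ (i : ℕ)) * ((-1 : ℚ) ^ (i : ℕ)) = 1 := by
      rw [← pow_add, ← two_mul, pow_mul]
      norm_num
    calc (-1 : ℚ) ^ (i : ℕ) * ((-1 : ℚ) ^ d * ((-1 : ℚ) ^ (i : ℕ) * 1))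
        = (-1 : ℚ) ^ d * (((-1 : ℚ) ^ (i : ℕ)) * ((-1 : ℚ) ^ (i : ℕ))) := by ring
      _ = (-1 : ℚ) ^ d * 1 := by rw [hsq]
  · rw [if_neg (fun hc => h (hval.1 hc)), if_neg h]
    ring

lemma Tm_mul_Tm (d : ℕ) :
    Tm d * Tm d = ((-1 : ℚ) ^ d) • (1 : Matrix (Fin (d + 1)) (Fin (d + 1)) ℚ) := by
  ext j i
  have hj := j.isLt
  have hi := i.isLt
  rw [Matrix.mul_apply]
  simp only [Tm, Matrix.of_apply, Matrix.smul_apply, Matrix.one_apply, smul_eq_mul]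
  rw [Finset.sum_eq_single_of_mem (⟨d - (j : ℕ), by omega⟩ : Fin (d + 1))
    (Finset.mem_univ _) (fun b _ hb => by
      rw [if_neg (show ¬ ((j : ℕ) + (b : ℕ) = d) from
        fun hc => hb (Fin.ext (show (b : ℕ) = d - (j : ℕ) by omega))), zero_mul])]
  rw [if_pos (show (j : ℕ) + (d - (j : ℕ)) = d by omega)]
  by_cases h : j = i
  · have hvi : (j : ℕ) = (i : ℕ) := by rw [h]
    rw [if_pos (show d - (j : ℕ) + (i : ℕ) = d by omega), if_pos h, mul_one]
    rw [neg_one_pow_sub d (j : ℕ) (by omega), hvi]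
    rw [mul_assoc, ← pow_add, ← two_mul, pow_mul]
    norm_num
  · have hvi : ¬ ((j : ℕ) = (i : ℕ)) := fun hc => h (Fin.ext hc)
    rw [if_neg (show ¬ (d - (j : ℕ) + (i : ℕ) = d) by omega), if_neg h, mul_zero, mul_zero]

lemma P_eq_Fm (d : ℕ) : P d = Fm d := by
  rw [P_eq, EY_mul_EZ]

lemma Tx_eq_Tm (d : ℕ) : Tx d = Tm d := by
  rw [Tx, expM_Ys, expM_Zs, EY_mul_EZ, Fm_mul_EY]

end Stmt19

open Stmt19 in
/-- T_x eᵢ = (-1)ⁱ e_{d-i} for 0 ≤ i ≤ d, and P³ = T_x² = (-1)ᵈ I. -/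
theorem stmt_19 (d : ℕ) :
    (∀ i : Fin (d + 1), Tx d *ᵥ (Pi.single i (1 : ℚ) : Fin (d + 1) → ℚ) =
      ((-1 : ℚ) ^ (i : ℕ)) • (Pi.single i.rev (1 : ℚ) : Fin (d + 1) → ℚ)) ∧
    P d ^ 3 = ((-1 : ℚ) ^ d) • (1 : Matrix (Fin (d + 1)) (Fin (d + 1)) ℚ) ∧
    Tx d ^ 2 = ((-1 : ℚ) ^ d) • (1 : Matrix (Fin (d + 1)) (Fin (d + 1)) ℚ) := by
  refine ⟨fun i => ?_, ?_, ?_⟩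
  · rw [Tx_eq_Tm, Matrix.mulVec_single]
    funext j
    have hj := j.isLt
    have hi := i.isLt
    have hrev : ((i.rev : Fin (d + 1)) : ℕ) = d - (i : ℕ) := by
      rw [Fin.val_rev]
      omega
    simp only [Tm, Matrix.of_apply, mul_one, Pi.smul_apply, Matrix.col_apply, op_smul_eq_mul, Pi.single_apply, smul_eq_mul]
    by_cases h : j = i.rev
    · have hv : (j : ℕ) = d - (i : ℕ) := by rw [h, hrev]
      rw [if_pos (show (j : ℕ) + (i : ℕ) = d by omega), if_pos h, mul_one]
    · rw [if_neg (show ¬ ((j : ℕ) + (i : ℕ) = d) from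
        fun hc => h (Fin.ext (by rw [hrev]; omega))), if_neg h, mul_zero]
  · rw [P_eq_Fm, pow_succ, pow_succ, pow_one, Fm_mul_Fm, F2m_mul_Fm]
  · rw [Tx_eq_Tm, pow_two, Tm_mul_Tm]
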